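/- Let σ_m(n) ∈ (0,1) denote the unique root in (0,1) of the equation z = α_n(mμ_n − mμ_n z). Then for all sufficiently large n the constant K_m(n) is well defined, and K_m(n) = 1 + O(ε_n) as n → ∞; that is, there is a constant M such that |K_m(n) − 1| ≤ M ε_n for all large n. -/

import Mathlib

open MeasureTheory Filter Topology

/-- `φ_j(n) = ∫ e^{-jμ_n x} dA_n(x)`. -/
noncomputable def phi (μ : ℝ) (A : Measure ℝ) (j : ℕ) : ℝ :=
  ∫ x, Real.exp (-(j * μ * x)) ∂A

/-- `C_j(n) = ∏_{i=1}^j (1-φ_i(n))/φ_i(n)`. -/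
noncomputable def Cprod (μ : ℝ) (A : Measure ℝ) (j : ℕ) : ℝ :=
  ∏ i ∈ Finset.Icc 1 j, (1 - phi μ A i) / phi μ A i

/-- The constant `K_m(n)` of relation (3.5). -/
noncomputable def Km (m : ℕ) (μ : ℝ) (A : Measure ℝ) (σ : ℝ) : ℝ :=
  (1 + (1 - σ) * ∑ j ∈ Finset.Icc 1 m,
      (m.choose j : ℝ) * (Cprod μ A j / (1 - phi μ A j)) *
        ((m * (1 - phi μ A j) - j) / (m * (1 - σ) - j)))⁻¹

namespace KmAux

lemma mono_aux {F F' : ℝ → ℝ} {a : ℝ}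
    (hd : ∀ x, a ≤ x → HasDerivAt F (F' x) x)
    (h0 : ∀ x, a ≤ x → 0 ≤ F' x) {x : ℝ} (hx : a ≤ x) : F a ≤ F x := by
  have hmono : MonotoneOn F (Set.Ici a) := by
    apply monotoneOn_of_deriv_nonneg (convex_Ici a)
      (fun y hy => (hd y hy).continuousAt.continuousWithinAt)
    · intro y hy
      rw [interior_Ici] at hy
      exact (hd y hy.le).differentiableAt.differentiableWithinAt
    · intro y hy
      rw [interior_Ici] at hy
      rw [(hd y hy.le).deriv]
      exact h0 y hy.le
  exact hmono Set.self_mem_Ici hx hx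

lemma hasDerivAt_expneg (x : ℝ) :
    HasDerivAt (fun t : ℝ => Real.exp (-t)) (-Real.exp (-x)) x := by
  have h := (hasDerivAt_neg x).exp
  rw [mul_neg_one] at h
  exact h

lemma exp_neg_le_quad {t : ℝ} (ht : 0 ≤ t) : Real.exp (-t) ≤ 1 - t + t ^ 2 / 2 := by
  have hd : ∀ x : ℝ, (0:ℝ) ≤ x →
      HasDerivAt (fun t : ℝ => 1 - t + t ^ 2 / 2 - Real.exp (-t)) (-1 + x + Real.exp (-x)) x := by
    intro x _
    have h1 := (((hasDerivAt_const x (1:ℝ)).sub (hasDerivAt_id x)).add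
      ((hasDerivAt_pow 2 x).div_const 2)).sub (hasDerivAt_expneg x)
    exact h1.congr_deriv (by norm_num)
  have h0 : ∀ x : ℝ, (0:ℝ) ≤ x → 0 ≤ -1 + x + Real.exp (-x) := by
    intro x _
    have := Real.add_one_le_exp (-x)
    linarith
  have h := mono_aux hd h0 ht
  simp only [neg_zero, Real.exp_zero] at h
  norm_num at h
  linarith

lemma cubic_le_exp_neg {t : ℝ} (ht : 0 ≤ t) :
    1 - t + t ^ 2 / 2 - t ^ 3 / 6 ≤ Real.exp (-t) := by
  have hd : ∀ x : ℝ, (0:ℝ) ≤ x →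
      HasDerivAt (fun t : ℝ => Real.exp (-t) - (1 - t + t ^ 2 / 2 - t ^ 3 / 6))
        (-Real.exp (-x) - (-1 + x - x ^ 2 / 2)) x := by
    intro x _
    have h1 := (hasDerivAt_expneg x).sub ((((hasDerivAt_const x (1:ℝ)).sub (hasDerivAt_id x)).add
      ((hasDerivAt_pow 2 x).div_const 2)).sub ((hasDerivAt_pow 3 x).div_const 6))
    exact h1.congr_deriv (by norm_num; ring)
  have h0 : ∀ x : ℝ, (0:ℝ) ≤ x → 0 ≤ -Real.exp (-x) - (-1 + x - x ^ 2 / 2) := by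
    intro x hx
    have := exp_neg_le_quad hx
    linarith
  have h := mono_aux hd h0 ht
  simp only [neg_zero, Real.exp_zero] at h
  norm_num at h
  linarith

lemma concave_pt {p q : ℝ} (hp : 0 ≤ p) (hpq : p ≤ q) :
    p * (1 - Real.exp (-q)) ≤ q * (1 - Real.exp (-p)) := by
  have hd : ∀ x : ℝ, p ≤ x →
      HasDerivAt (fun x : ℝ => x * (1 - Real.exp (-p)) - p * (1 - Real.exp (-x)))
        ((1 - Real.exp (-p)) - p * Real.exp (-x)) x := by
    intro x _
    have h2 : HasDerivAt (fun x : ℝ => 1 - Real.exp (-x)) (Real.exp (-x)) x := by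
      exact ((hasDerivAt_const x (1:ℝ)).sub (hasDerivAt_expneg x)).congr_deriv (by ring)
    have h1 := ((hasDerivAt_id x).mul_const (1 - Real.exp (-p))).sub (h2.const_mul p)
    exact h1.congr_deriv (by ring)
  have h0 : ∀ x : ℝ, p ≤ x → 0 ≤ (1 - Real.exp (-p)) - p * Real.exp (-x) := by
    intro x hx
    have h1 : Real.exp (-x) ≤ Real.exp (-p) := Real.exp_le_exp.mpr (by linarith)
    have h2 : p * Real.exp (-x) ≤ p * Real.exp (-p) := mul_le_mul_of_nonneg_left h1 hp
    have h3 : (p + 1) * Real.exp (-p) ≤ Real.exp p * Real.exp (-p) :=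
      mul_le_mul_of_nonneg_right (by linarith [Real.add_one_le_exp p]) (Real.exp_pos _).le
    rw [← Real.exp_add] at h3
    simp at h3
    nlinarith [Real.exp_pos (-p)]
  have h := mono_aux hd h0 hpq
  have hp0 : p * (1 - Real.exp (-p)) - p * (1 - Real.exp (-p)) = 0 := by ring
  nlinarith [h]

lemma tangent_le (t T : ℝ) : (1 + T - t) * Real.exp (-T) ≤ Real.exp (-t) := by
  have h := Real.add_one_le_exp (T - t)
  have h2 := mul_le_mul_of_nonneg_right h (Real.exp_pos (-T)).le
  rw [← Real.exp_add] at h2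
  have h3 : T - t + -T = -t := by ring
  rw [h3] at h2
  nlinarith [h2]


variable {a : Measure ℝ} [IsProbabilityMeasure a]

lemma integrable_expneg (h0 : ∀ᵐ x ∂a, 0 ≤ x) {t : ℝ} (ht : 0 ≤ t) :
    Integrable (fun x => Real.exp (-(t * x))) a := by
  refine (integrable_const (1:ℝ)).mono' ?_ ?_
  · exact (Real.continuous_exp.comp ((continuous_const.mul continuous_id).neg)).aestronglyMeasurable
  · filter_upwards [h0] with x hx
    rw [Real.norm_eq_abs, abs_of_pos (Real.exp_pos _)]
    exact Real.exp_le_one_iff.mpr (by nlinarith)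

lemma integrable_poly1 (hint1 : Integrable (fun x => x) a) (t : ℝ) :
    Integrable (fun x : ℝ => 1 - t * x) a :=
  (integrable_const 1).sub (hint1.const_mul t)

lemma integrable_poly2 (hint1 : Integrable (fun x => x) a)
    (hint2 : Integrable (fun x => x ^ 2) a) (t : ℝ) :
    Integrable (fun x : ℝ => 1 - t * x + t ^ 2 / 2 * x ^ 2) a :=
  (integrable_poly1 hint1 t).add (hint2.const_mul (t ^ 2 / 2))

lemma integrable_poly3 (hint1 : Integrable (fun x => x) a)
    (hint2 : Integrable (fun x => x ^ 2) a) (hint3 : Integrable (fun x => x ^ 3) a) (t : ℝ) :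
    Integrable (fun x : ℝ => 1 - t * x + t ^ 2 / 2 * x ^ 2 - t ^ 3 / 6 * x ^ 3) a :=
  (integrable_poly2 hint1 hint2 t).sub (hint3.const_mul (t ^ 3 / 6))

lemma integral_poly1 (hint1 : Integrable (fun x => x) a) (t : ℝ) :
    ∫ x, (1 - t * x) ∂a = 1 - t * ∫ x, x ∂a := by
  rw [integral_sub (integrable_const 1) (hint1.const_mul t), integral_const_mul]
  simp

lemma integral_poly2 (hint1 : Integrable (fun x => x) a)
    (hint2 : Integrable (fun x => x ^ 2) a) (t : ℝ) :
    ∫ x, (1 - t * x + t ^ 2 / 2 * x ^ 2) ∂a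
      = 1 - t * (∫ x, x ∂a) + t ^ 2 / 2 * ∫ x, x ^ 2 ∂a := by
  rw [integral_add (integrable_poly1 hint1 t) (hint2.const_mul (t ^ 2 / 2)),
    integral_poly1 hint1, integral_const_mul]

lemma integral_poly3 (hint1 : Integrable (fun x => x) a)
    (hint2 : Integrable (fun x => x ^ 2) a) (hint3 : Integrable (fun x => x ^ 3) a) (t : ℝ) :
    ∫ x, (1 - t * x + t ^ 2 / 2 * x ^ 2 - t ^ 3 / 6 * x ^ 3) ∂a
      = 1 - t * (∫ x, x ∂a) + t ^ 2 / 2 * (∫ x, x ^ 2 ∂a) - t ^ 3 / 6 * ∫ x, x ^ 3 ∂a := by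
  rw [integral_sub (integrable_poly2 hint1 hint2 t) (hint3.const_mul (t ^ 3 / 6)),
    integral_poly2 hint1 hint2, integral_const_mul]

lemma Iexp_le_one (h0 : ∀ᵐ x ∂a, 0 ≤ x) {t : ℝ} (ht : 0 ≤ t) :
    ∫ x, Real.exp (-(t * x)) ∂a ≤ 1 := by
  have h := integral_mono_ae (integrable_expneg h0 ht) (integrable_const 1) ?_
  · simpa using h
  · filter_upwards [h0] with x hx
    exact Real.exp_le_one_iff.mpr (by nlinarith)

lemma Iexp_le_quadratic (h0 : ∀ᵐ x ∂a, 0 ≤ x)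
    (hint1 : Integrable (fun x => x) a) (hint2 : Integrable (fun x => x ^ 2) a)
    {t : ℝ} (ht : 0 ≤ t) :
    ∫ x, Real.exp (-(t * x)) ∂a ≤
      1 - t * (∫ x, x ∂a) + t ^ 2 / 2 * (∫ x, x ^ 2 ∂a) := by
  have h := integral_mono_ae (g := fun x : ℝ => 1 - t * x + t ^ 2 / 2 * x ^ 2)
    (integrable_expneg h0 ht) (integrable_poly2 hint1 hint2 t) ?_
  · rwa [integral_poly2 hint1 hint2] at h
  · filter_upwards [h0] with x hx
    have h := exp_neg_le_quad (mul_nonneg ht hx)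
    rw [mul_pow] at h
    linarith

lemma Iexp_ge_cubic (h0 : ∀ᵐ x ∂a, 0 ≤ x)
    (hint1 : Integrable (fun x => x) a) (hint2 : Integrable (fun x => x ^ 2) a)
    (hint3 : Integrable (fun x => x ^ 3) a) {t : ℝ} (ht : 0 ≤ t) :
    1 - t * (∫ x, x ∂a) + t ^ 2 / 2 * (∫ x, x ^ 2 ∂a) - t ^ 3 / 6 * (∫ x, x ^ 3 ∂a)
      ≤ ∫ x, Real.exp (-(t * x)) ∂a := by
  have h := integral_mono_ae (f := fun x : ℝ => 1 - t * x + t ^ 2 / 2 * x ^ 2 - t ^ 3 / 6 * x ^ 3)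
    (integrable_poly3 hint1 hint2 hint3 t) (integrable_expneg h0 ht) ?_
  · rwa [integral_poly3 hint1 hint2 hint3] at h
  · filter_upwards [h0] with x hx
    have h := cubic_le_exp_neg (mul_nonneg ht hx)
    rw [mul_pow, mul_pow] at h
    linarith

lemma Iexp_ge_jensen (h0 : ∀ᵐ x ∂a, 0 ≤ x)
    (hint1 : Integrable (fun x => x) a) {t : ℝ} (ht : 0 ≤ t) :
    Real.exp (-(t * ∫ x, x ∂a)) ≤ ∫ x, Real.exp (-(t * x)) ∂a := by
  set L := ∫ x, x ∂a with hL
  have hint : Integrable (fun x : ℝ => (1 + t * L - t * x) * Real.exp (-(t * L))) a := by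
    exact ((integrable_const (1 + t * L)).sub (hint1.const_mul t)).mul_const _
  have h := integral_mono hint (integrable_expneg h0 ht)
    (fun x => tangent_le (t * x) (t * L))
  have hcalc : ∫ x, ((1 + t * L - t * x) * Real.exp (-(t * L))) ∂a = Real.exp (-(t * L)) := by
    rw [integral_mul_const,
      integral_sub (integrable_const (1 + t * L)) (hint1.const_mul t), integral_const_mul, ← hL]
    simp only [integral_const, measure_univ, probReal_univ, ENNReal.toReal_one, smul_eq_mul, one_mul]
    ring_nf
  rwa [hcalc] at h

lemma sq_integral_le (hint1 : Integrable (fun x => x) a)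
    (hint2 : Integrable (fun x => x ^ 2) a) :
    (∫ x, x ∂a) ^ 2 ≤ ∫ x, x ^ 2 ∂a := by
  set L := ∫ x, x ∂a with hL
  have h := integral_nonneg (μ := a) (f := fun x => (x - L) ^ 2) (fun x => sq_nonneg _)
  have hexp : ∫ x, (x - L) ^ 2 ∂a = (∫ x, x ^ 2 ∂a) - 2 * L * L + L ^ 2 := by
    have heq : (fun x : ℝ => (x - L) ^ 2) = fun x => x ^ 2 - 2 * L * x + L ^ 2 := by
      funext x; ring
    have hi : Integrable (fun x : ℝ => x ^ 2 - 2 * L * x) a := by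
      exact hint2.sub (hint1.const_mul (2 * L))
    rw [heq, integral_add hi (integrable_const _),
      integral_sub hint2 (hint1.const_mul (2 * L)), integral_const_mul, ← hL]
    simp
  rw [hexp] at h
  nlinarith

lemma Iexp_concave (h0 : ∀ᵐ x ∂a, 0 ≤ x) {c d u : ℝ} (hc : 0 ≤ c) (hd : 0 < d) (hdu : d ≤ u) :
    d * (1 - ∫ x, Real.exp (-(c * u * x)) ∂a) ≤ u * (1 - ∫ x, Real.exp (-(c * d * x)) ∂a) := by
  have hcu : 0 ≤ c * u := mul_nonneg hc (hd.le.trans hdu)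
  have hcd : 0 ≤ c * d := mul_nonneg hc hd.le
  have key : ∀ᵐ x ∂a, d * (1 - Real.exp (-(c * u * x))) ≤ u * (1 - Real.exp (-(c * d * x))) := by
    filter_upwards [h0] with x hx
    have hcx : 0 ≤ c * x := mul_nonneg hc hx
    rcases eq_or_lt_of_le hcx with hcx0 | hcxpos
    · have h1 : c * u * x = 0 := by
        rw [show c * u * x = (c * x) * u by ring, ← hcx0, zero_mul]
      have h2 : c * d * x = 0 := by
        rw [show c * d * x = (c * x) * d by ring, ← hcx0, zero_mul]
      rw [h1, h2]
      simp
    · have h := concave_pt (p := c * x * d) (q := c * x * u)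
        (mul_nonneg hcx hd.le) (by nlinarith)
      have h' : (c * x) * (d * (1 - Real.exp (-(c * u * x)))) ≤
          (c * x) * (u * (1 - Real.exp (-(c * d * x)))) := by
        calc (c * x) * (d * (1 - Real.exp (-(c * u * x))))
            = (c * x * d) * (1 - Real.exp (-(c * x * u))) := by
              rw [show c * u * x = c * x * u by ring]; ring
          _ ≤ (c * x * u) * (1 - Real.exp (-(c * x * d))) := h
          _ = (c * x) * (u * (1 - Real.exp (-(c * d * x)))) := by
              rw [show c * d * x = c * x * d by ring]; ring
      exact le_of_mul_le_mul_left h' hcxpos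
  have hid : ∀ t' : ℝ, 0 ≤ t' → ∀ w : ℝ,
      ∫ x, (w * (1 - Real.exp (-(t' * x)))) ∂a
        = w * (1 - ∫ x, Real.exp (-(t' * x)) ∂a) := by
    intro t' ht' w
    rw [integral_const_mul, integral_sub (integrable_const 1) (integrable_expneg h0 ht')]
    simp
  have h := integral_mono_ae
    (f := fun x : ℝ => d * (1 - Real.exp (-(c * u * x))))
    (g := fun x : ℝ => u * (1 - Real.exp (-(c * d * x))))
    (by exact (((integrable_const (1:ℝ)).sub (integrable_expneg h0 hcu)).const_mul d))
    (by exact (((integrable_const (1:ℝ)).sub (integrable_expneg h0 hcd)).const_mul u)) key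
  rwa [hid (c * u) hcu d, hid (c * d) hcd u] at h


lemma choose_le_two_pow (m j : ℕ) : (m.choose j : ℝ) ≤ 2 ^ m := by
  have h : m.choose j ≤ 2 ^ m := by
    rcases le_or_gt j m with hj | hj
    · calc m.choose j ≤ ∑ i ∈ Finset.range (m + 1), m.choose i :=
          Finset.single_le_sum (f := fun i => m.choose i) (fun i _ => Nat.zero_le _)
            (Finset.mem_range.mpr (Nat.lt_succ_of_le hj))
      _ = 2 ^ m := Nat.sum_range_choose m
    · rw [Nat.choose_eq_zero_of_lt hj]; exact Nat.zero_le _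
  calc (m.choose j : ℝ) ≤ ((2 ^ m : ℕ) : ℝ) := by exact_mod_cast h
    _ = 2 ^ m := by push_cast; ring

lemma Cprod_div_bound {ν : ℝ} {a : Measure ℝ} {m j : ℕ} (hj1 : 1 ≤ j) (hjm : j ≤ m)
    (hlo : ∀ i : ℕ, 1 ≤ i → i ≤ m → Real.exp (-2) ≤ phi ν a i)
    (hhi : ∀ i : ℕ, 1 ≤ i → i ≤ m → phi ν a i ≤ 1) :
    |Cprod ν a j / (1 - phi ν a j)| ≤ Real.exp 2 ^ m := by
  have hE1 : (1:ℝ) ≤ Real.exp 2 := by linarith [Real.add_one_le_exp 2]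
  have hEprod : Real.exp 2 * Real.exp (-2) = 1 := by
    rw [← Real.exp_add]; norm_num
  obtain ⟨k, rfl⟩ : ∃ k, j = k + 1 := ⟨j - 1, (Nat.succ_pred_eq_of_pos hj1).symm⟩
  by_cases h1 : phi ν a (k + 1) = 1
  · have hC0 : Cprod ν a (k + 1) = 0 := by
      apply Finset.prod_eq_zero (i := k + 1) (Finset.mem_Icc.mpr ⟨by omega, le_rfl⟩)
      simp [h1]
    rw [hC0]
    simp
    positivity
  · have hlo' := hlo (k + 1) (by omega) hjm
    have hφpos : 0 < phi ν a (k + 1) := lt_of_lt_of_le (Real.exp_pos _) hlo'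
    have hφne : (1:ℝ) - phi ν a (k + 1) ≠ 0 := fun hz => h1 (by linarith)
    have hsplit : Cprod ν a (k + 1)
        = Cprod ν a k * ((1 - phi ν a (k + 1)) / phi ν a (k + 1)) := by
      rw [Cprod, Cprod, Finset.prod_Icc_succ_top (by omega : 1 ≤ k + 1)]
    have hfac : ∀ i : ℕ, i ∈ Finset.Icc 1 k → 0 ≤ (1 - phi ν a i) / phi ν a i ∧
        (1 - phi ν a i) / phi ν a i ≤ Real.exp 2 := by
      intro i hi
      obtain ⟨hi1, hik⟩ := Finset.mem_Icc.mp hi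
      have him : i ≤ m := by omega
      have h2 := hlo i hi1 him
      have h3 := hhi i hi1 him
      have h4 : 0 < phi ν a i := lt_of_lt_of_le (Real.exp_pos _) h2
      constructor
      · apply div_nonneg (by linarith) h4.le
      · rw [div_le_iff₀ h4]
        have h5 : Real.exp 2 * Real.exp (-2) ≤ Real.exp 2 * phi ν a i :=
          mul_le_mul_of_nonneg_left h2 (Real.exp_pos 2).le
        rw [hEprod] at h5
        linarith
    have hP0 : 0 ≤ Cprod ν a k :=
      Finset.prod_nonneg (fun i hi => (hfac i hi).1)
    have hPb : Cprod ν a k ≤ Real.exp 2 ^ k := by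
      rw [Cprod]
      calc (∏ i ∈ Finset.Icc 1 k, (1 - phi ν a i) / phi ν a i)
          ≤ ∏ i ∈ Finset.Icc 1 k, Real.exp 2 :=
            Finset.prod_le_prod (fun i hi => (hfac i hi).1) (fun i hi => (hfac i hi).2)
        _ = Real.exp 2 ^ k := by rw [Finset.prod_const, Nat.card_Icc]; norm_num
    rw [hsplit]
    have hre : Cprod ν a k * ((1 - phi ν a (k + 1)) / phi ν a (k + 1)) / (1 - phi ν a (k + 1))
        = Cprod ν a k / phi ν a (k + 1) := by
      field_simp
    rw [hre, abs_div, abs_of_nonneg hP0, abs_of_pos hφpos]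
    calc Cprod ν a k / phi ν a (k + 1) ≤ Real.exp 2 ^ k / Real.exp (-2) :=
        div_le_div₀ (by positivity) hPb (Real.exp_pos _) hlo'
      _ = Real.exp 2 ^ k * Real.exp 2 := by
          rw [Real.exp_neg]
          field_simp
      _ = Real.exp 2 ^ (k + 1) := by ring
      _ ≤ Real.exp 2 ^ m := pow_le_pow_right₀ hE1 hjm


set_option maxHeartbeats 2000000 in
lemma key (m : ℕ) (hm : 1 ≤ m) (a : Measure ℝ) [IsProbabilityMeasure a] (ν : ℝ) (hν : 0 < ν)
    (h0 : ∀ᵐ x ∂a, 0 ≤ x)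
    (hint1 : Integrable (fun x => x) a) (hint2 : Integrable (fun x => x ^ 2) a)
    (hint3 : Integrable (fun x => x ^ 3) a)
    (e : ℝ) (he : 0 < e)
    (hϱ : (∫ x, x ∂a)⁻¹ / (m * ν) = 1 - e)
    (B : ℝ) (hB : 1 ≤ B) (hϱ3 : ∫ x, ((m : ℝ) * ν * x) ^ 3 ∂a ≤ B)
    (s : ℝ) (hs : s ∈ Set.Ioo (0:ℝ) 1)
    (hroot : ∫ x, Real.exp (-(((m : ℝ) * ν - (m : ℝ) * ν * s) * x)) ∂a = s)
    (he2 : e ≤ 1 / 2)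
    (heδ : e < (min 1 (3 / (2 * B))) / 16)
    (hem : e < 1 / (16 * (m : ℝ)))
    (heS : e < 1 / (16 * ((m : ℝ) * ((2:ℝ) ^ m * Real.exp 2 ^ m * ((m : ℝ) * 2))))) :
    (∀ j ∈ Finset.Icc 1 m, (m : ℝ) * (1 - s) ≠ (j : ℝ)) ∧
      |Km m ν a s - 1| ≤ (16 * ((m : ℝ) * ((2:ℝ) ^ m * Real.exp 2 ^ m * ((m : ℝ) * 2)))) * e := by
  have hmR : (1:ℝ) ≤ (m : ℝ) := by exact_mod_cast hm
  obtain ⟨L, hLdef⟩ : ∃ r, (∫ x, x ∂a) = r := ⟨_, rfl⟩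
  obtain ⟨Q, hQdef⟩ : ∃ r, (∫ x, x ^ 2 ∂a) = r := ⟨_, rfl⟩
  obtain ⟨R, hRdef⟩ : ∃ r, (∫ x, x ^ 3 ∂a) = r := ⟨_, rfl⟩
  obtain ⟨c, hcdef⟩ : ∃ r, (m : ℝ) * ν = r := ⟨_, rfl⟩
  have hc : 0 < c := by rw [← hcdef]; exact mul_pos (by linarith) hν
  rw [hLdef] at hϱ
  rw [hcdef] at hϱ hϱ3 hroot
  have h1e : (0:ℝ) < 1 - e := by linarith
  have hLinv : L⁻¹ = (1 - e) * c := by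
    rw [div_eq_iff (ne_of_gt hc)] at hϱ
    rw [hϱ]
  have hL : L = ((1 - e) * c)⁻¹ := by rw [← hLinv, inv_inv]
  have hLpos : 0 < L := by rw [hL]; exact inv_pos.mpr (mul_pos h1e hc)
  have hcL : c * L = (1 - e)⁻¹ := by rw [hL]; field_simp
  have hinv2 : (1 - e)⁻¹ ≤ 2 := by
    rw [inv_eq_one_div, div_le_iff₀ h1e]; linarith
  have hinv12 : (1 - e)⁻¹ ≤ 1 + 2 * e := by
    rw [inv_eq_one_div, div_le_iff₀ h1e]; nlinarith
  have hone_le_inv : 1 ≤ (1 - e)⁻¹ := by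
    rw [inv_eq_one_div, le_div_iff₀ h1e]; linarith
  -- moments
  have hR3 : ∫ x, (c * x) ^ 3 ∂a = c ^ 3 * R := by
    simp only [mul_pow]
    rw [integral_const_mul, hRdef]
  have hρ3B : c ^ 3 * R ≤ B := by rw [← hR3]; exact hϱ3
  have hρ3nn : 0 ≤ c ^ 3 * R := by
    rw [← hR3]
    apply integral_nonneg_of_ae
    filter_upwards [h0] with x hx
    positivity
  have hρ2_1 : 1 ≤ c ^ 2 * Q := by
    have hsq := sq_integral_le hint1 hint2
    rw [hLdef, hQdef] at hsq
    have h1 : c ^ 2 * L ^ 2 ≤ c ^ 2 * Q :=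
      mul_le_mul_of_nonneg_left hsq (sq_nonneg c)
    have h3 : (1:ℝ) ≤ (1 - e)⁻¹ * (1 - e)⁻¹ := by nlinarith [hone_le_inv]
    have h4 : (c * L) * (c * L) = c ^ 2 * L ^ 2 := by ring
    rw [hcL] at h4
    linarith [h1, h3, h4]
  have hu0 : (0:ℝ) < 1 - s := by linarith [hs.2]
  have hu1 : 1 - s < 1 := by linarith [hs.1]
  have hIθ : ∫ x, Real.exp (-(c * (1 - s) * x)) ∂a = s := by
    have hcs : c * (1 - s) = c - c * s := by ring
    rw [hcs]
    exact hroot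
  -- the master inequality
  have hA : ∀ d : ℝ, 0 < d → d ≤ 1 - s → d * (c ^ 2 * Q) / 2 - d ^ 2 * (c ^ 3 * R) / 6 ≤ 2 * e := by
    intro d hd hdu
    have hconc := Iexp_concave (u := 1 - s) h0 hc.le hd hdu
    rw [hIθ] at hconc
    have hcub := Iexp_ge_cubic h0 hint1 hint2 hint3 (mul_nonneg hc.le hd.le) (t := c * d)
    rw [hLdef, hQdef, hRdef] at hcub
    have h6 : (1 - s) * (1 - ∫ x, Real.exp (-(c * d * x)) ∂a)
        ≤ (1 - s) * ((c * d) * L - (c * d) ^ 2 / 2 * Q + (c * d) ^ 3 / 6 * R) :=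
      mul_le_mul_of_nonneg_left (by linarith [hcub]) hu0.le
    have h8 : d ≤ (c * d) * L - (c * d) ^ 2 / 2 * Q + (c * d) ^ 3 / 6 * R := by
      have h7 : (1 - s) * d ≤ (1 - s) * ((c * d) * L - (c * d) ^ 2 / 2 * Q + (c * d) ^ 3 / 6 * R) := by
        calc (1 - s) * d = d * (1 - s) := by ring
          _ ≤ (1 - s) * (1 - ∫ x, Real.exp (-(c * d * x)) ∂a) := hconc
          _ ≤ _ := h6
      exact le_of_mul_le_mul_left h7 hu0
    have h9 : d ≤ d * (1 - e)⁻¹ - d ^ 2 * (c ^ 2 * Q) / 2 + d ^ 3 * (c ^ 3 * R) / 6 := by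
      have e1 : (c * d) * L = d * (c * L) := by ring
      rw [e1, hcL] at h8
      linarith [h8]
    have h10 : d * (1 - e)⁻¹ - d ≤ d * (2 * e) := by
      have := mul_le_mul_of_nonneg_left hinv12 hd.le
      linarith
    have h11 : d * (d * (c ^ 2 * Q) / 2 - d ^ 2 * (c ^ 3 * R) / 6) ≤ d * (2 * e) := by
      linarith [h9, h10]
    exact le_of_mul_le_mul_left h11 hd
  set δ : ℝ := min 1 (3 / (2 * B)) with hδdef
  have hδpos : 0 < δ := lt_min one_pos (by positivity)
  have hδ1 : δ ≤ 1 := min_le_left _ _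
  have hδB : δ * B ≤ 3 / 2 := by
    have h1 : δ ≤ 3 / (2 * B) := min_le_right _ _
    have hBpos : (0:ℝ) < B := by linarith
    have := mul_le_mul_of_nonneg_right h1 hBpos.le
    calc δ * B ≤ 3 / (2 * B) * B := this
      _ = 3 / 2 := by field_simp
  have hu_small : 1 - s < δ := by
    by_contra hge
    push_neg at hge
    have h := hA δ hδpos hge
    have h1 : δ / 2 ≤ δ * (c ^ 2 * Q) / 2 := by
      have := mul_le_mul_of_nonneg_left hρ2_1 hδpos.le
      linarith
    have h2 : δ ^ 2 * (c ^ 3 * R) / 6 ≤ δ / 4 := by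
      have h3 : δ ^ 2 * (c ^ 3 * R) ≤ δ ^ 2 * B := mul_le_mul_of_nonneg_left hρ3B (sq_nonneg δ)
      have h4 : δ * (δ * B) ≤ δ * (3 / 2) := mul_le_mul_of_nonneg_left hδB hδpos.le
      linarith
    have h5 : δ / 4 ≤ 2 * e := by linarith
    have h6 : e < δ / 16 := heδ
    linarith
  have hu8e : 1 - s ≤ 8 * e := by
    have h := hA (1 - s) hu0 le_rfl
    have h1 : (1 - s) / 2 ≤ (1 - s) * (c ^ 2 * Q) / 2 := by
      have := mul_le_mul_of_nonneg_left hρ2_1 hu0.le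
      linarith
    have h2 : (1 - s) ^ 2 * (c ^ 3 * R) / 6 ≤ (1 - s) / 4 := by
      have h3 : (1 - s) * ((1 - s) * (c ^ 3 * R)) ≤ (1 - s) * (δ * (c ^ 3 * R)) :=
        mul_le_mul_of_nonneg_left (mul_le_mul_of_nonneg_right hu_small.le hρ3nn) hu0.le
      have h4 : δ * (c ^ 3 * R) ≤ 3 / 2 := by
        have h5 : δ * (c ^ 3 * R) ≤ δ * B := mul_le_mul_of_nonneg_left hρ3B hδpos.le
        linarith
      have h6 : (1 - s) * (δ * (c ^ 3 * R)) ≤ (1 - s) * (3 / 2) :=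
        mul_le_mul_of_nonneg_left h4 hu0.le
      linarith
    linarith
  -- phi bounds
  have hφub : ∀ j : ℕ, 1 ≤ j → j ≤ m → phi ν a j ≤ 1 := by
    intro j h1 h2
    exact Iexp_le_one h0 (t := (j:ℝ) * ν) (by positivity)
  have hφlb : ∀ j : ℕ, 1 ≤ j → j ≤ m → Real.exp (-2) ≤ phi ν a j := by
    intro j h1 h2
    have hjν : (0:ℝ) ≤ (j:ℝ) * ν := by positivity
    have hjm' : (j:ℝ) ≤ (m:ℝ) := by exact_mod_cast h2
    have hjL : (j:ℝ) * ν * L ≤ 2 := by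
      have hh : (j:ℝ) * ν * L ≤ c * L := by
        rw [← hcdef]
        have := mul_le_mul_of_nonneg_right (mul_le_mul_of_nonneg_right hjm' hν.le) hLpos.le
        linarith
      linarith [hcL, hinv2]
    have hjen := Iexp_ge_jensen h0 hint1 (t := (j:ℝ) * ν) hjν
    rw [hLdef] at hjen
    have hmono : Real.exp (-2) ≤ Real.exp (-((j:ℝ) * ν * L)) :=
      Real.exp_le_exp.mpr (by linarith)
    show Real.exp (-2) ≤ ∫ x, Real.exp (-((j:ℝ) * ν * x)) ∂a
    calc Real.exp (-2) ≤ Real.exp (-((j:ℝ) * ν * L)) := hmono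
      _ ≤ ∫ x, Real.exp (-((j:ℝ) * ν * x)) ∂a := hjen
  -- the sum
  have hmu : (m : ℝ) * (1 - s) < 1 / 2 := by
    have h1 : (m : ℝ) * (1 - s) ≤ (m : ℝ) * (8 * e) :=
      mul_le_mul_of_nonneg_left hu8e (by linarith)
    have h2 : e * (16 * (m:ℝ)) < 1 := by
      rw [lt_div_iff₀ (by positivity)] at hem
      exact hem
    linarith
  constructor
  · intro j hj
    obtain ⟨hj1, hjm⟩ := Finset.mem_Icc.mp hj
    have hj1' : (1:ℝ) ≤ (j:ℝ) := by exact_mod_cast hj1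
    exact ne_of_lt (by linarith)
  · set S := ∑ j ∈ Finset.Icc 1 m,
        (m.choose j : ℝ) * (Cprod ν a j / (1 - phi ν a j)) *
          (((m:ℝ) * (1 - phi ν a j) - (j:ℝ)) / ((m:ℝ) * (1 - s) - (j:ℝ))) with hSdef
    have hKmeq : Km m ν a s = (1 + (1 - s) * S)⁻¹ := by rw [Km]
    have hterm : ∀ j ∈ Finset.Icc 1 m,
        |(m.choose j : ℝ) * (Cprod ν a j / (1 - phi ν a j)) *
          (((m:ℝ) * (1 - phi ν a j) - (j:ℝ)) / ((m:ℝ) * (1 - s) - (j:ℝ)))|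
          ≤ (2:ℝ) ^ m * Real.exp 2 ^ m * ((m:ℝ) * 2) := by
      intro j hj
      obtain ⟨hj1, hjm⟩ := Finset.mem_Icc.mp hj
      have hj1' : (1:ℝ) ≤ (j:ℝ) := by exact_mod_cast hj1
      have hjm' : (j:ℝ) ≤ (m:ℝ) := by exact_mod_cast hjm
      have hCb := Cprod_div_bound hj1 hjm hφlb hφub
      have hφ1 := hφub j hj1 hjm
      have hφ2 := hφlb j hj1 hjm
      have hnum : |(m:ℝ) * (1 - phi ν a j) - (j:ℝ)| ≤ (m:ℝ) := by
        have hb1 : 0 ≤ (m:ℝ) * (1 - phi ν a j) := mul_nonneg (by linarith) (by linarith)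
        have hb2 : (m:ℝ) * (1 - phi ν a j) ≤ (m:ℝ) := by
          calc (m:ℝ) * (1 - phi ν a j) ≤ (m:ℝ) * 1 :=
              mul_le_mul_of_nonneg_left (by linarith [Real.exp_pos (-2)]) (by linarith)
            _ = (m:ℝ) := mul_one _
        rw [abs_le]
        constructor
        · linarith
        · linarith
      have hden : 1 / 2 ≤ |(m:ℝ) * (1 - s) - (j:ℝ)| := by
        apply le_abs.mpr
        right
        linarith
      have hdiv : |((m:ℝ) * (1 - phi ν a j) - (j:ℝ)) / ((m:ℝ) * (1 - s) - (j:ℝ))| ≤ (m:ℝ) * 2 := by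
        rw [abs_div, div_le_iff₀ (by linarith)]
        have hh := mul_le_mul_of_nonneg_left hden (show (0:ℝ) ≤ (m:ℝ) * 2 by linarith)
        linarith [hnum]
      rw [abs_mul, abs_mul]
      have hch : |(m.choose j : ℝ)| ≤ (2:ℝ) ^ m := by
        rw [abs_of_nonneg (by positivity)]
        exact choose_le_two_pow m j
      apply mul_le_mul (mul_le_mul hch hCb (abs_nonneg _) (by positivity)) hdiv
        (abs_nonneg _) (by positivity)
    have hSb : |S| ≤ (m:ℝ) * ((2:ℝ) ^ m * Real.exp 2 ^ m * ((m:ℝ) * 2)) := by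
      rw [hSdef]
      calc |∑ j ∈ Finset.Icc 1 m,
          (m.choose j : ℝ) * (Cprod ν a j / (1 - phi ν a j)) *
            (((m:ℝ) * (1 - phi ν a j) - (j:ℝ)) / ((m:ℝ) * (1 - s) - (j:ℝ)))|
          ≤ ∑ j ∈ Finset.Icc 1 m,
            |(m.choose j : ℝ) * (Cprod ν a j / (1 - phi ν a j)) *
              (((m:ℝ) * (1 - phi ν a j) - (j:ℝ)) / ((m:ℝ) * (1 - s) - (j:ℝ)))| :=
            Finset.abs_sum_le_sum_abs _ _
        _ ≤ ∑ _j ∈ Finset.Icc 1 m, (2:ℝ) ^ m * Real.exp 2 ^ m * ((m:ℝ) * 2) :=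
            Finset.sum_le_sum hterm
        _ = (m:ℝ) * ((2:ℝ) ^ m * Real.exp 2 ^ m * ((m:ℝ) * 2)) := by
            rw [Finset.sum_const, Nat.card_Icc]
            simp [nsmul_eq_mul]
    set S₀ : ℝ := (m : ℝ) * ((2:ℝ) ^ m * Real.exp 2 ^ m * ((m : ℝ) * 2)) with hS₀def
    have hS₀pos : 0 < S₀ := by
      rw [hS₀def]
      have : (0:ℝ) < (m:ℝ) := by linarith
      positivity
    have h16 : e * (16 * S₀) < 1 := by
      rw [lt_div_iff₀ (by positivity)] at heS
      exact heS
    have habs1 : |(1 - s) * S| ≤ (1 - s) * S₀ := by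
      rw [abs_mul, abs_of_pos hu0]
      exact mul_le_mul_of_nonneg_left hSb hu0.le
    have habs2 : (1 - s) * S₀ ≤ 8 * e * S₀ := mul_le_mul_of_nonneg_right hu8e hS₀pos.le
    have habs3 : 8 * e * S₀ ≤ 1 / 2 := by linarith [h16]
    have hpos1 : (0:ℝ) < 1 + (1 - s) * S := by
      have := neg_abs_le ((1 - s) * S)
      linarith
    have h4 : 1 / 2 ≤ 1 + (1 - s) * S := by
      have := neg_abs_le ((1 - s) * S)
      linarith
    have heq : (1 + (1 - s) * S)⁻¹ - 1 = -((1 - s) * S) / (1 + (1 - s) * S) := by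
      field_simp
      ring
    rw [hKmeq, heq, abs_div, abs_neg, abs_of_pos hpos1, div_le_iff₀ hpos1]
    have h5 : 16 * S₀ * e * (1 / 2) ≤ 16 * S₀ * e * (1 + (1 - s) * S) :=
      mul_le_mul_of_nonneg_left h4 (by positivity)
    linarith [habs1, habs2, h5]


end KmAux

/-- Relation (7.4): in the heavy-traffic regime, for large `n` the constant `K_m(n)` is well
defined and `K_m(n) = 1 + O(ε_n)`. -/
theorem Km_asymptotics
    (m : ℕ) (hm : 1 ≤ m)
    (A : ℕ → Measure ℝ) [∀ n, IsProbabilityMeasure (A n)]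
    (μ : ℕ → ℝ) (hμ : ∀ n, 0 < μ n)
    (hsupp : ∀ n, A n {x | x < 0} = 0)
    (hint1 : ∀ n, Integrable (fun x => x) (A n))
    (hint2 : ∀ n, Integrable (fun x => x ^ 2) (A n))
    (hint3 : ∀ n, Integrable (fun x => x ^ 3) (A n))
    (ε : ℕ → ℝ) (hε : ∀ n, 0 < ε n) (hε0 : Tendsto ε atTop (𝓝 0))
    (hϱ : ∀ n, (∫ x, x ∂(A n))⁻¹ / (m * μ n) = 1 - ε n)
    (hϱ3 : ∃ B : ℝ, ∀ n, ∫ x, (m * μ n * x) ^ 3 ∂(A n) ≤ B)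
    (ρ2 : ℝ) (hϱ2 : Tendsto (fun n => ∫ x, (m * μ n * x) ^ 2 ∂(A n)) atTop (𝓝 ρ2))
    (σ : ℕ → ℝ) (hσ : ∀ n, σ n ∈ Set.Ioo (0 : ℝ) 1)
    (hroot : ∀ n, ∫ x, Real.exp (-((m * μ n - m * μ n * σ n) * x)) ∂(A n) = σ n) :
    ∃ M : ℝ, ∃ N : ℕ, ∀ n ≥ N,
      (∀ j ∈ Finset.Icc 1 m, (m : ℝ) * (1 - σ n) ≠ j) ∧
        |Km m (μ n) (A n) (σ n) - 1| ≤ M * ε n := by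
  obtain ⟨B0, hB0⟩ := hϱ3
  have hmR : (1:ℝ) ≤ (m : ℝ) := by exact_mod_cast hm
  set B : ℝ := max B0 1 with hBdef
  have hB1 : (1:ℝ) ≤ B := le_max_right _ _
  set S₀ : ℝ := (m : ℝ) * ((2:ℝ) ^ m * Real.exp 2 ^ m * ((m : ℝ) * 2)) with hS₀def
  have hS₀pos : 0 < S₀ := by
    rw [hS₀def]
    have h1 : (0:ℝ) < (m:ℝ) := by linarith
    positivity
  set εc : ℝ := min (min (1 / 2) ((min 1 (3 / (2 * B))) / 16))
      (min (1 / (16 * (m : ℝ))) (1 / (16 * S₀))) with hεcdef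
  have hεcpos : 0 < εc := by
    have hBpos : (0:ℝ) < B := by linarith
    have h1 : (0:ℝ) < (m:ℝ) := by linarith
    apply lt_min
    · apply lt_min
      · norm_num
      · have : (0:ℝ) < min 1 (3 / (2 * B)) := lt_min one_pos (by positivity)
        linarith
    · exact lt_min (by positivity) (by positivity)
  obtain ⟨N, hN⟩ := eventually_atTop.mp (hε0.eventually_lt_const hεcpos)
  refine ⟨16 * S₀, N, fun n hn => ?_⟩
  have hen : ε n < εc := hN n hn
  have h0 : ∀ᵐ x ∂(A n), 0 ≤ x := by
    rw [ae_iff]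
    simpa [not_le] using hsupp n
  have h1 := min_le_left (min (1 / 2) ((min 1 (3 / (2 * B))) / 16))
      (min (1 / (16 * (m : ℝ))) (1 / (16 * S₀)))
  have h2 := min_le_right (min (1 / 2) ((min 1 (3 / (2 * B))) / 16))
      (min (1 / (16 * (m : ℝ))) (1 / (16 * S₀)))
  have hA1 : εc ≤ 1 / 2 := le_trans h1 (min_le_left _ _)
  have hA2 : εc ≤ (min 1 (3 / (2 * B))) / 16 := le_trans h1 (min_le_right _ _)
  have hA3 : εc ≤ 1 / (16 * (m : ℝ)) := le_trans h2 (min_le_left _ _)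
  have hA4 : εc ≤ 1 / (16 * S₀) := le_trans h2 (min_le_right _ _)
  have hres := KmAux.key m hm (A n) (μ n) (hμ n) h0 (hint1 n) (hint2 n) (hint3 n)
    (ε n) (hε n) (hϱ n) B hB1 (le_trans (hB0 n) (le_max_left _ _)) (σ n) (hσ n) (hroot n)
    (le_of_lt (lt_of_lt_of_le hen hA1)) (lt_of_lt_of_le hen hA2)
    (lt_of_lt_of_le hen hA3) (by rw [hS₀def] at hA4; exact lt_of_lt_of_le hen hA4)
  rw [hS₀def]
  exact hres
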